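/- For α ∈ (0, 1/2) and a traded asset S = (S_0, S_T), the VaR-based risk measure ρ_{A_α,S} is finitely valued on all of X if and only if there exists λ > 0 with ℙ[S_T < λ] ≤ α. -/

import Mathlib

open BoundedContinuousFunction MeasureTheory Pointwise

variable {Ω : Type*} [TopologicalSpace Ω] [DiscreteTopology Ω] [Nonempty Ω]

/-- `X` is modeled as the Banach lattice `Ω →ᵇ ℝ` of bounded functions with sup norm
(the discrete topology makes every function continuous) and pointwise order.
An acceptance set is a nonempty proper monotone subset of `X`. -/
def IsAcceptanceSet (A : Set (Ω →ᵇ ℝ)) : Prop :=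
  A.Nonempty ∧ A ≠ Set.univ ∧ ∀ x ∈ A, ∀ y, x ≤ y → y ∈ A

/-- the risk measure `ρ_{A,S}` w.r.t. the acceptance set `A` and the traded asset
`S = (S0, ST)`, with values in the extended reals -/
noncomputable def riskMeasure (A : Set (Ω →ᵇ ℝ)) (S0 : ℝ) (ST : Ω →ᵇ ℝ) (x : Ω →ᵇ ℝ) : EReal :=
  sInf ((fun m : ℝ => (m : EReal)) '' {m : ℝ | x + (m / S0) • ST ∈ A})

theorem var_riskMeasure_finite_iff_of_small_level
    [MeasurableSpace Ω] (P : Measure Ω) [IsProbabilityMeasure P] (α : ℝ) (hα : α ∈ Set.Ioo (0 : ℝ) (1/2)) (S0 : ℝ) (hS0 : 0 < S0) (ST : Ω →ᵇ ℝ) (hST : 0 ≤ ST) (hST0 : ST ≠ 0) :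
    (∀ x : Ω →ᵇ ℝ,
        riskMeasure {y : Ω →ᵇ ℝ | P {ω | y ω < 0} ≤ ENNReal.ofReal α} S0 ST x ≠ ⊤ ∧
        riskMeasure {y : Ω →ᵇ ℝ | P {ω | y ω < 0} ≤ ENNReal.ofReal α} S0 ST x ≠ ⊥) ↔
      ∃ lam : ℝ, 0 < lam ∧ P {ω | ST ω < lam} ≤ ENNReal.ofReal α := by
  obtain ⟨hα0, hα2⟩ := hα
  have hαlt1 : ENNReal.ofReal α < 1 := by
    rw [← ENNReal.ofReal_one]
    exact (ENNReal.ofReal_lt_ofReal_iff_of_nonneg hα0.le).2 (by linarith)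
  constructor
  · -- finiteness implies existence of lam
    intro h
    by_contra hc
    push_neg at hc
    have hx := (h (BoundedContinuousFunction.const Ω (-1 : ℝ))).1
    apply hx
    unfold riskMeasure
    convert sInf_empty
    · rfl
    rw [Set.image_eq_empty]
    ext m
    simp only [Set.mem_setOf_eq, Set.mem_empty_iff_false, iff_false]
    intro hm
    rcases le_or_gt m 0 with hm0 | hm0
    · -- m ≤ 0 : the whole space has negative value
      have : {ω : Ω | (BoundedContinuousFunction.const Ω (-1 : ℝ) + (m / S0) • ST) ω < 0}
          = Set.univ := by
        ext ω
        simp only [Set.mem_univ, iff_true, Set.mem_setOf_eq,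
          BoundedContinuousFunction.coe_add, BoundedContinuousFunction.coe_smul,
          Pi.add_apply, Pi.smul_apply, BoundedContinuousFunction.const_apply, smul_eq_mul]
        have h1 : m / S0 ≤ 0 := div_nonpos_of_nonpos_of_nonneg hm0 hS0.le
        have h2 : (0 : ℝ) ≤ ST ω := hST ω
        nlinarith
      rw [this, measure_univ] at hm
      exact absurd hm (not_le.2 hαlt1)
    · -- m > 0 : {ST < S0/m} ⊆ {value < 0}
      have hsub : {ω : Ω | ST ω < S0 / m}
          ⊆ {ω : Ω | (BoundedContinuousFunction.const Ω (-1 : ℝ) + (m / S0) • ST) ω < 0} := by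
        intro ω hω
        simp only [Set.mem_setOf_eq] at hω ⊢
        simp only [BoundedContinuousFunction.coe_add, BoundedContinuousFunction.coe_smul,
          Pi.add_apply, Pi.smul_apply, BoundedContinuousFunction.const_apply, smul_eq_mul]
        have h1 : (m / S0) * ST ω < (m / S0) * (S0 / m) :=
          mul_lt_mul_of_pos_left hω (div_pos hm0 hS0)
        have h2 : (m / S0) * (S0 / m) = 1 := by field_simp
        linarith
      have := (measure_mono hsub).trans hm
      exact absurd this (not_le.2 (hc (S0 / m) (div_pos hS0 hm0)))
  · -- existence of lam implies finiteness
    rintro ⟨lam, hlam, hP⟩ x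
    constructor
    · -- not ⊤ : large enough m is accepted
      set m : ℝ := S0 * ‖x‖ / lam with hm_def
      have hmem : x + (m / S0) • ST ∈
          {y : Ω →ᵇ ℝ | P {ω | y ω < 0} ≤ ENNReal.ofReal α} := by
        refine le_trans (measure_mono ?_) hP
        intro ω hω
        simp only [Set.mem_setOf_eq, BoundedContinuousFunction.coe_add,
          BoundedContinuousFunction.coe_smul, Pi.add_apply, Pi.smul_apply, smul_eq_mul] at hω ⊢
        by_contra hge
        push_neg at hge
        have hmS0 : m / S0 = ‖x‖ / lam := by
          field_simp [hm_def]
          rw [hm_def]; field_simp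
        have h1 : (m / S0) * ST ω ≥ (‖x‖ / lam) * lam := by
          rw [hmS0]
          exact mul_le_mul_of_nonneg_left hge (by positivity)
        rw [div_mul_cancel₀ _ hlam.ne'] at h1
        have h2 : -‖x‖ ≤ x ω := neg_abs_le _ |>.trans' (by
          have := x.norm_coe_le_norm ω
          simp [abs_le] at this ⊢
          linarith [abs_nonneg (x ω)])
        linarith
      refine ne_top_of_le_ne_top (by simp : ((m : EReal)) ≠ ⊤) (sInf_le ⟨m, hmem, rfl⟩)
    · -- not ⊥ : m's are bounded below
      have hbound : ∀ e ∈ ((fun m : ℝ => (m : EReal)) ''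
          {m : ℝ | x + (m / S0) • ST ∈
            {y : Ω →ᵇ ℝ | P {ω | y ω < 0} ≤ ENNReal.ofReal α}}),
          ((-(S0 * ‖x‖ / lam) - S0) : ℝ) ≤ e := by
        rintro e ⟨m, hm, rfl⟩
        rw [EReal.coe_le_coe_iff]
        by_contra hlt
        push_neg at hlt
        -- m < -(S0‖x‖/lam) - S0 < 0, show the position fails the VaR test
        have hmneg : m < 0 := by
          have : 0 ≤ S0 * ‖x‖ / lam := by positivity
          linarith
        have hmS0 : m / S0 < -(‖x‖ / lam) := by
          rw [div_lt_iff₀ hS0]  -- m < -(‖x‖/lam) * S0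
          have : -(‖x‖ / lam) * S0 = -(S0 * ‖x‖ / lam) := by ring
          rw [this]
          linarith
        have hsub : {ω : Ω | lam ≤ ST ω}
            ⊆ {ω : Ω | (x + (m / S0) • ST) ω < 0} := by
          intro ω hω
          simp only [Set.mem_setOf_eq] at hω ⊢
          simp only [BoundedContinuousFunction.coe_add, BoundedContinuousFunction.coe_smul,
            Pi.add_apply, Pi.smul_apply, smul_eq_mul]
          have h1 : (m / S0) * ST ω ≤ (m / S0) * lam := by
            exact mul_le_mul_of_nonpos_left hω
              (div_nonpos_of_nonpos_of_nonneg hmneg.le hS0.le)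
          have h2 : (m / S0) * lam < -‖x‖ := by
            calc (m / S0) * lam < (-(‖x‖ / lam)) * lam := by
                  exact mul_lt_mul_of_pos_right hmS0 hlam
            _ = -‖x‖ := by field_simp
          have h3 : x ω ≤ ‖x‖ := by
            have := x.norm_coe_le_norm ω
            exact (le_abs_self _).trans this
          linarith
        have hge : 1 - ENNReal.ofReal α ≤ P {ω | (x + (m / S0) • ST) ω < 0} := by
          have hcompl : {ω : Ω | lam ≤ ST ω} = {ω : Ω | ST ω < lam}ᶜ := by
            ext ω; simp [not_lt]
          have huniv : (1 : ENNReal) ≤ P {ω | ST ω < lam} + P {ω | lam ≤ ST ω} := by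
            have : (Set.univ : Set Ω) ⊆ {ω | ST ω < lam} ∪ {ω | lam ≤ ST ω} := by
              intro ω _
              rcases lt_or_ge (ST ω) lam with h | h
              · exact Or.inl h
              · exact Or.inr h
            calc (1 : ENNReal) = P Set.univ := (measure_univ (μ := P)).symm
              _ ≤ P ({ω | ST ω < lam} ∪ {ω | lam ≤ ST ω}) := measure_mono this
              _ ≤ _ := measure_union_le _ _
          have h4 : 1 - ENNReal.ofReal α ≤ P {ω | lam ≤ ST ω} := by
            have := tsub_le_iff_left.2 huniv
            calc 1 - ENNReal.ofReal α ≤ 1 - P {ω | ST ω < lam} :=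
                  tsub_le_tsub_left hP 1
              _ ≤ P {ω | lam ≤ ST ω} := by
                  rw [tsub_le_iff_left]; exact huniv
          exact h4.trans (measure_mono hsub)
        have hαα : ENNReal.ofReal α < 1 - ENNReal.ofReal α := by
          apply lt_tsub_iff_right.2
          rw [← ENNReal.ofReal_add hα0.le hα0.le, ← ENNReal.ofReal_one]
          exact (ENNReal.ofReal_lt_ofReal_iff_of_nonneg (by positivity)).2 (by linarith)
        exact absurd hm (not_le.2 (lt_of_lt_of_le hαα hge))
      intro hbot
      have := le_sInf hbound
      unfold riskMeasure at hbot
      rw [hbot] at this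
      exact EReal.coe_ne_bot _ (le_bot_iff.1 this)
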